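/- Under the bijection φ from ordered rooted binary trees of size n+1 to 132-avoiding permutations of size n, a node m of t with subtree t_m satisfies: t_m is a caterpillar of size j+1 if and only if the pattern-reduction of r_π(m) (the permutation r̃_π(m)) is a 231-avoiding permutation of size j. In particular γ(t) − 1 equals the maximal size of a permutation in Av(231) ∩ r̃_π. -/

import Mathlib

/-- Ordered rooted binary trees: a tree is a leaf or an internal node with two ordered children. -/
inductive BTree where
  | leaf : BTree
  | node : BTree → BTree → BTree

/-- Size of a tree = number of leaves. -/
def BTree.size : BTree → ℕ
  | .leaf => 1
  | .node l r => l.size + r.size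

/-- A tree is a caterpillar if every internal node has at least one leaf child. -/
def BTree.isCaterpillar : BTree → Prop
  | .leaf => True
  | .node l r => (l = .leaf ∨ r = .leaf) ∧ l.isCaterpillar ∧ r.isCaterpillar

/-- The list of all subtrees (rooted at some node) of a tree. -/
def BTree.subtrees : BTree → List BTree
  | .leaf => [.leaf]
  | .node l r => .node l r :: (l.subtrees ++ r.subtrees)

/-- γ(t): the size of the biggest caterpillar subtree of `t`. -/
noncomputable def BTree.gamma (t : BTree) : ℕ :=
  sSup {m | ∃ s ∈ t.subtrees, s.isCaterpillar ∧ s.size = m}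

/-- `fcount k n`: number of ordered rooted binary trees of size `n` with γ ≤ k. -/
noncomputable def fcount (k n : ℕ) : ℕ :=
  Nat.card {t : BTree // t.size = n ∧ t.gamma ≤ k}

/-- The bijection φ from ordered rooted binary trees of size `n+1` to 132-avoiding
permutations of size `n` (written as lists of values): the internal nodes are labelled
in pre-order decreasingly starting from `n`, and the permutation is read off by
collapsing leaves; equivalently `φ(node l r) = (φ l shifted by size r − 1) ++ [n] ++ φ r`. -/
def phi : BTree → List ℕ
  | .leaf => []
  | .node l r => ((phi l).map (· + (r.size - 1))) ++ (l.size + r.size - 1) :: phi r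

/-- `rsub π i` is the subsequence of entries `π_k` such that `π_k ≤ π_i` and every entry
strictly between positions `k` and `i` is `≤ π_i` (the entries of `r_π(π_i)` in order). -/
def rsub (π : List ℕ) (i : ℕ) : List ℕ :=
  ((List.range π.length).filter (fun k =>
    decide (π.getD k 0 ≤ π.getD i 0) &&
      (List.range π.length).all (fun j =>
        !(decide (min k i < j) && decide (j < max k i)) ||
          decide (π.getD j 0 ≤ π.getD i 0)))).map (fun k => π.getD k 0)

/-- A list of (distinct) values avoids the pattern 231: no positions `i < j < k`
with `l_k < l_i < l_j`. -/
def Avoids231 (l : List ℕ) : Prop :=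
  ∀ i j k : Fin l.length, i < j → j < k → ¬ (l.get k < l.get i ∧ l.get i < l.get j)

/-- The subtree of `t` rooted at the internal node labelled `m` by the pre-order
decreasing labelling used by φ (`none` if there is no such node). -/
def subAt : BTree → ℕ → Option BTree
  | .leaf, _ => none
  | .node l r, m =>
    if m = l.size + r.size - 1 then some (.node l r)
    else if r.size ≤ m then subAt l (m - (r.size - 1))
    else subAt r m

namespace CatAux

open List

lemma size_pos (t : BTree) : 1 ≤ t.size := by
  induction t with
  | leaf => simp [BTree.size]
  | node l r ihl ihr => simp only [BTree.size]; omega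

lemma phi_length (t : BTree) : (phi t).length = t.size - 1 := by
  induction t with
  | leaf => simp [phi, BTree.size]
  | node l r ihl ihr =>
    have hl := size_pos l; have hr := size_pos r
    simp only [phi, BTree.size, length_append, length_map, length_cons, ihl, ihr]
    omega

lemma map_add_add (L : List ℕ) (a b : ℕ) :
    (L.map (· + a)).map (· + b) = L.map (· + (a + b)) := by
  rw [List.map_map]; apply List.map_congr_left; intro x _; simp [Function.comp, add_assoc]

lemma phi_perm (t : BTree) : (phi t).Perm (List.range' 1 (t.size - 1)) := by
  induction t with
  | leaf => simp [phi, BTree.size]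
  | node l r ihl ihr =>
    have hl := size_pos l; have hr := size_pos r
    have h1 : ((phi l).map (· + (r.size - 1))).Perm (List.range' r.size (l.size - 1)) := by
      have hm := ihl.map (· + (r.size - 1))
      have e : (List.range' 1 (l.size - 1)).map (· + (r.size - 1))
          = List.range' r.size (l.size - 1) := by
        rw [show List.range' r.size (l.size - 1) = List.range' ((r.size - 1) + 1) (l.size - 1) by
              congr 1; omega,
            ← List.map_add_range']
        apply List.map_congr_left; intro x _; omega
      rwa [e] at hm
    have h2 : (phi (BTree.node l r)).Perm
        (List.range' r.size (l.size - 1) ++ (l.size + r.size - 1) :: List.range' 1 (r.size - 1)) :=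
      h1.append (ihr.cons _)
    refine h2.trans ?_
    have key : (List.range' 1 (r.size - 1) ++ List.range' r.size (l.size - 1))
        ++ [l.size + r.size - 1] = List.range' 1 (BTree.size (BTree.node l r) - 1) := by
      have e1 : List.range' 1 (r.size - 1) ++ List.range' r.size (l.size - 1)
          = List.range' 1 (l.size - 1 + (r.size - 1)) := by
        have h := List.range'_append (s := 1) (m := r.size - 1) (n := l.size - 1) (step := 1)
        rw [show 1 + 1 * (r.size - 1) = r.size by omega] at h
        exact h.trans (by rw [Nat.add_comm])
      rw [e1]
      have e2 : [l.size + r.size - 1] = List.range' (1 + (l.size - 1 + (r.size - 1))) 1 := by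
        simp; omega
      rw [e2]
      have h := List.range'_append (s := 1) (m := l.size - 1 + (r.size - 1)) (n := 1) (step := 1)
      simp only [one_mul] at h
      rw [h]
      congr 1
      simp only [BTree.size]; omega
    rw [← key]
    have h3 : ((l.size + r.size - 1) :: List.range' 1 (r.size - 1)).Perm
        (List.range' 1 (r.size - 1) ++ [l.size + r.size - 1]) :=
      (List.perm_append_singleton _ _).symm
    refine (Perm.append_left _ h3).trans ?_
    rw [← List.append_assoc]
    exact (List.perm_append_comm).append_right _

lemma mem_phi {t : BTree} {x : ℕ} : x ∈ phi t ↔ 1 ≤ x ∧ x ≤ t.size - 1 := by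
  rw [(phi_perm t).mem_iff, List.mem_range'_1]; omega

lemma phi_nodup (t : BTree) : (phi t).Nodup :=
  (phi_perm t).nodup_iff.mpr List.nodup_range'


lemma subAt_decomp : ∀ (t : BTree) (m : ℕ) (s : BTree), subAt t m = some s →
    s ∈ t.subtrees ∧ 2 ≤ s.size ∧ 1 ≤ m ∧ m ≤ t.size - 1 ∧
    ∃ (A B : List ℕ) (c : ℕ),
      phi t = A ++ (phi s).map (· + c) ++ B ∧ m = s.size - 1 + c ∧
      (∀ a ∈ A.getLast?, m < a) ∧ (∀ b ∈ B.head?, m < b) := by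
  intro t
  induction t with
  | leaf => intro m s hs; simp [subAt] at hs
  | node l r ihl ihr =>
    intro m s hs
    have hl := size_pos l; have hr := size_pos r
    simp only [subAt] at hs
    split_ifs at hs with h1 h2
    · -- m = root label
      cases hs
      obtain rfl : m = l.size + r.size - 1 := h1
      refine ⟨List.mem_cons_self, by simp [BTree.size]; omega, by omega,
        by simp [BTree.size], [], [], 0, ?_, by simp [BTree.size], by simp, by simp⟩
      simp
    · -- left subtree
      obtain ⟨hmem, hsz, hm1, hm2, A, B, c, hdec, hmc, hA, hB⟩ := ihl _ _ hs
      have hm2' : m - (r.size - 1) ≤ l.size - 1 := hm2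
      refine ⟨List.mem_cons_of_mem _ (List.mem_append_left _ hmem), hsz, by omega,
        by simp [BTree.size]; omega,
        A.map (· + (r.size - 1)),
        B.map (· + (r.size - 1)) ++ (l.size + r.size - 1) :: phi r,
        c + (r.size - 1), ?_, by omega, ?_, ?_⟩
      · show phi (BTree.node l r) = _
        simp only [phi, hdec, List.map_append, map_add_add, List.append_assoc]
      · intro a ha
        rw [List.getLast?_map] at ha
        obtain ⟨a0, ha0, rfl⟩ := Option.map_eq_some_iff.mp (Option.mem_def.mp ha)
        have := hA a0 ha0
        omega
      · intro b hb
        rcases B with _ | ⟨b0, B'⟩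
        · simp at hb; omega
        · simp only [List.map_cons, List.cons_append, List.head?_cons] at hb
          have := hB b0 (by simp)
          simp at hb; omega
    · -- right subtree
      obtain ⟨hmem, hsz, hm1, hm2, A, B, c, hdec, hmc, hA, hB⟩ := ihr _ _ hs
      refine ⟨List.mem_cons_of_mem _ (List.mem_append_right _ hmem), hsz, hm1,
        by simp [BTree.size]; omega,
        ((phi l).map (· + (r.size - 1))) ++ (l.size + r.size - 1) :: A,
        B, c, ?_, hmc, ?_, hB⟩
      · show phi (BTree.node l r) = _
        simp only [phi, hdec, List.append_assoc, List.cons_append]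
      · intro a ha
        rw [List.getLast?_append] at ha
        have hne : ((l.size + r.size - 1) :: A).getLast? ≠ none := by
          simp [List.getLast?_eq_none_iff]
        rcases hA' : ((l.size + r.size - 1) :: A).getLast? with _ | a1
        · exact absurd hA' hne
        · rw [hA', Option.some_or, Option.mem_def, Option.some_inj] at ha
          subst ha
          rcases A with _ | ⟨a0, A'⟩
          · simp at hA'; omega
          · rw [List.getLast?_cons_cons] at hA'
            have := hA _ hA'
            omega


lemma getD_mem {L : List ℕ} {q : ℕ} (h : q < L.length) : L.getD q 0 ∈ L := by
  rw [List.getD_eq_getElem _ _ h]; exact List.getElem_mem _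

lemma getD_middle (A M B : List ℕ) (q : ℕ) (hq : q < M.length) :
    (A ++ M ++ B).getD (A.length + q) 0 = M.getD q 0 := by
  rw [List.append_assoc, List.getD_append_right _ _ _ _ (by omega),
    Nat.add_sub_cancel_left, List.getD_append _ _ _ _ hq]

lemma rsub_block (A M B : List ℕ) (m i : ℕ)
    (hM : ∀ x ∈ M, x ≤ m)
    (hA : ∀ a ∈ A.getLast?, m < a) (hB : ∀ b ∈ B.head?, m < b)
    (hi1 : A.length ≤ i) (hi2 : i < A.length + M.length)
    (him : (A ++ M ++ B).getD i 0 = m) :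
    rsub (A ++ M ++ B) i = M := by
  set π := A ++ M ++ B with hπ
  have hlen : π.length = A.length + M.length + B.length := by simp [hπ, Nat.add_assoc]
  have hmid : ∀ k, A.length ≤ k → k < A.length + M.length → π.getD k 0 ≤ m := by
    intro k h1 h2
    have := getD_middle A M B (k - A.length) (by omega)
    rw [Nat.add_sub_cancel' h1] at this
    rw [hπ, this]
    exact hM _ (getD_mem (by omega))
  have hleft : A ≠ [] → m < π.getD (A.length - 1) 0 := by
    intro hne
    have h1 : π.getD (A.length - 1) 0 = A.getLast hne := by
      have hlt : A.length - 1 < A.length := by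
        have := List.length_pos_iff.mpr hne; omega
      rw [hπ, List.append_assoc, List.getD_append _ _ _ _ hlt,
        List.getD_eq_getElem _ _ hlt, List.getLast_eq_getElem]
    rw [h1]
    exact hA _ (by rw [List.getLast?_eq_getLast hne]; rfl)
  have hright : B ≠ [] → m < π.getD (A.length + M.length) 0 := by
    intro hne
    rcases B with _ | ⟨b0, B'⟩
    · exact absurd rfl hne
    have h1 : π.getD (A.length + M.length) 0 = b0 := by
      rw [hπ, List.getD_append_right _ _ _ _ (by simp),
        show A.length + M.length - (A ++ M).length = 0 by simp]
      rfl
    rw [h1]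
    exact hB b0 rfl
  have claim : ∀ k < π.length,
      ((decide (π.getD k 0 ≤ π.getD i 0) &&
        (List.range π.length).all (fun j =>
          !(decide (min k i < j) && decide (j < max k i)) ||
            decide (π.getD j 0 ≤ π.getD i 0))) = true)
        ↔ (A.length ≤ k ∧ k < A.length + M.length) := by
    intro k hk
    rw [Bool.and_eq_true, decide_eq_true_eq, List.all_eq_true, him]
    constructor
    · rintro ⟨hk1, hk2⟩
      by_contra hcon
      rw [not_and_or, not_le, not_lt] at hcon
      rcases hcon with hcon | hcon
      · -- k < A.length
        have hne : A ≠ [] := by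
          intro h; rw [h] at hcon; simp at hcon
        rcases eq_or_lt_of_le (show k + 1 ≤ A.length by omega) with he | hlt
        · have := hleft hne
          rw [show A.length - 1 = k by omega] at this
          omega
        · have hj := hk2 (A.length - 1) (by rw [List.mem_range]; omega)
          simp only [Bool.or_eq_true, Bool.not_eq_true', Bool.and_eq_false_iff,
            decide_eq_false_iff_not, not_lt, decide_eq_true_eq] at hj
          have hmin : min k i < A.length - 1 := by
            have := min_le_left k i; omega
          have hmax : A.length - 1 < max k i := by
            have := le_max_right k i; omega
          rcases hj with (hj | hj) | hj
          · omega
          · omega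
          · have := hleft hne; omega
      · -- A.length + M.length ≤ k
        have hne : B ≠ [] := by
          intro h; rw [h] at hlen; simp at hlen; omega
        rcases eq_or_lt_of_le hcon with he | hlt
        · have := hright hne; rw [he] at this; omega
        · have hj := hk2 (A.length + M.length) (by rw [List.mem_range]; omega)
          simp only [Bool.or_eq_true, Bool.not_eq_true', Bool.and_eq_false_iff,
            decide_eq_false_iff_not, not_lt, decide_eq_true_eq] at hj
          have hmin : min k i < A.length + M.length := by
            have := min_le_right k i; omega
          have hmax : A.length + M.length < max k i := by
            have := le_max_left k i; omega
          rcases hj with (hj | hj) | hj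
          · omega
          · omega
          · have := hright hne; omega
    · rintro ⟨h1, h2⟩
      refine ⟨hmid k h1 h2, ?_⟩
      intro j hj
      simp only [Bool.or_eq_true, Bool.not_eq_true', Bool.and_eq_false_iff,
        decide_eq_false_iff_not, not_lt, decide_eq_true_eq]
      by_cases hjin : min k i < j ∧ j < max k i
      · right
        refine hmid j ?_ ?_
        · have h3 := min_le_left k i; have h4 := min_le_right k i
          omega
        · have h3 : max k i < A.length + M.length := by
            rcases max_choice k i with h | h <;> omega
          omega
      · left
        rw [not_and_or, not_lt, not_lt] at hjin
        rcases hjin with h | h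
        · left; omega
        · right; omega
  have key : ∀ p : ℕ → Bool,
      (∀ k < π.length, p k = true ↔ (A.length ≤ k ∧ k < A.length + M.length)) →
      ((List.range π.length).filter p).map (fun k => π.getD k 0) = M := by
    intro p hpc
    have hsplit : List.range π.length
        = List.range' 0 A.length ++ (List.range' A.length M.length
            ++ List.range' (A.length + M.length) B.length) := by
      rw [List.range_eq_range']
      have h2 : List.range' A.length M.length ++ List.range' (A.length + M.length) B.length
          = List.range' A.length (B.length + M.length) := by
        have h := List.range'_append (s := A.length) (m := M.length) (n := B.length) (step := 1)
        rw [Nat.add_comm B.length]; simpa using h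
      rw [h2]
      have h := List.range'_append (s := 0) (m := A.length) (n := B.length + M.length) (step := 1)
      simp only [one_mul, Nat.zero_add] at h
      rw [h]
      congr 1
      omega
    rw [hsplit, List.filter_append, List.filter_append]
    have hf1 : (List.range' 0 A.length).filter p = [] := by
      rw [List.filter_eq_nil_iff]
      intro a ha
      rw [List.mem_range'_1] at ha
      intro hp
      have := (hpc a (by omega)).mp hp
      omega
    have hf3 : (List.range' (A.length + M.length) B.length).filter p = [] := by
      rw [List.filter_eq_nil_iff]
      intro a ha
      rw [List.mem_range'_1] at ha
      intro hp
      have := (hpc a (by omega)).mp hp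
      omega
    have hf2 : (List.range' A.length M.length).filter p = List.range' A.length M.length := by
      rw [List.filter_eq_self]
      intro a ha
      rw [List.mem_range'_1] at ha
      exact (hpc a (by omega)).mpr ⟨ha.1, by omega⟩
    rw [hf1, hf2, hf3, List.append_nil, List.nil_append]
    apply List.ext_getElem
    · simp
    · intro q h1 h2
      simp only [List.getElem_map, List.getElem_range']
      have h3 : q < M.length := by simpa using h2
      rw [show A.length + 1 * q = A.length + q by omega]
      rw [hπ, getD_middle A M B q h3, List.getD_eq_getElem _ _ h3]
  exact key _ claim


lemma indexOf_append_left {a : ℕ} {l l' : List ℕ} (h : a ∈ l) :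
    (l ++ l').idxOf a = l.idxOf a := by
  induction l with
  | nil => simp at h
  | cons x xs ih =>
    by_cases hx : x = a
    · subst hx
      simp [List.idxOf_cons_self]
    · have hmem : a ∈ xs := by
        rcases List.mem_cons.mp h with h' | h'
        · exact absurd h'.symm hx
        · exact h'
      rw [List.cons_append, List.idxOf_cons, List.idxOf_cons,
        show (x == a) = false by simp [hx], cond_false, cond_false, ih hmem]

lemma rsub_subAt {t : BTree} {m : ℕ} {s : BTree} (h : subAt t m = some s) :
    ∃ c, m = s.size - 1 + c ∧
      rsub (phi t) ((phi t).idxOf m) = (phi s).map (· + c) := by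
  obtain ⟨hmem, hsz, hm1, hm2, A, B, c, hdec, hmc, hA, hB⟩ := subAt_decomp t m s h
  refine ⟨c, hmc, ?_⟩
  have hmM : m ∈ (phi s).map (· + c) := by
    rw [List.mem_map]
    exact ⟨s.size - 1, mem_phi.mpr ⟨by omega, le_refl _⟩, by omega⟩
  have hnd : (A ++ ((phi s).map (· + c) ++ B)).Nodup := by
    have := phi_nodup t
    rw [hdec, List.append_assoc] at this
    exact this
  have hmA : m ∉ A := by
    intro hmA
    rw [List.nodup_append] at hnd
    exact hnd.2.2 m hmA m (List.mem_append_left _ hmM) rfl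
  have hiA : (phi t).idxOf m
      = A.length + ((phi s).map (· + c)).idxOf m := by
    rw [hdec, List.append_assoc, List.idxOf_append_of_notMem hmA,
      indexOf_append_left hmM]
  have hilt : ((phi s).map (· + c)).idxOf m < ((phi s).map (· + c)).length :=
    List.idxOf_lt_length_iff.mpr hmM
  have hmt : m ∈ phi t := by rw [hdec]; exact List.mem_append_left _ (List.mem_append_right _ hmM)
  have hidx : (phi t).idxOf m < (phi t).length := List.idxOf_lt_length_iff.mpr hmt
  have him : (phi t).getD ((phi t).idxOf m) 0 = m := by
    rw [List.getD_eq_getElem _ _ hidx, List.getElem_idxOf hidx]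
  rw [hiA] at him ⊢
  rw [hdec] at him ⊢
  refine rsub_block A ((phi s).map (· + c)) B m _ ?_ hA hB (by omega) (by omega) him
  intro x hx
  rw [List.mem_map] at hx
  obtain ⟨y, hy, rfl⟩ := hx
  have := (mem_phi.mp hy).2
  omega


lemma avoids231_iff (l : List ℕ) : Avoids231 l ↔
    ∀ i j k : ℕ, i < j → j < k → k < l.length →
      ¬ (l.getD k 0 < l.getD i 0 ∧ l.getD i 0 < l.getD j 0) := by
  constructor
  · intro H i j k h1 h2 h3
    have hi : i < l.length := by omega
    have hj : j < l.length := by omega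
    rw [List.getD_eq_getElem _ _ hi, List.getD_eq_getElem _ _ hj, List.getD_eq_getElem _ _ h3]
    have := H ⟨i, hi⟩ ⟨j, hj⟩ ⟨k, h3⟩ h1 h2
    simpa [List.get_eq_getElem] using this
  · intro H i j k h1 h2
    have := H i j k h1 h2 k.isLt
    rw [List.getD_eq_getElem _ _ i.isLt, List.getD_eq_getElem _ _ j.isLt,
      List.getD_eq_getElem _ _ k.isLt] at this
    simpa [List.get_eq_getElem] using this

lemma avoids231_map_add (L : List ℕ) (c : ℕ) :
    Avoids231 (L.map (· + c)) ↔ Avoids231 L := by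
  rw [avoids231_iff, avoids231_iff]
  have hg : ∀ q < L.length, (L.map (· + c)).getD q 0 = L.getD q 0 + c := by
    intro q hq
    rw [List.getD_eq_getElem _ _ (by simpa using hq), List.getD_eq_getElem _ _ hq,
      List.getElem_map]
  constructor
  · intro H i j k h1 h2 h3
    have := H i j k h1 h2 (by simpa using h3)
    rw [hg i (by omega), hg j (by omega), hg k h3] at this
    omega
  · intro H i j k h1 h2 h3
    rw [List.length_map] at h3
    have := H i j k h1 h2 h3
    rw [hg i (by omega), hg j (by omega), hg k h3]
    omega

lemma avoids231_cons_max {x : ℕ} {L : List ℕ} (hx : ∀ y ∈ L, y < x) :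
    Avoids231 (x :: L) ↔ Avoids231 L := by
  rw [avoids231_iff, avoids231_iff]
  constructor
  · intro H i j k h1 h2 h3
    have := H (i + 1) (j + 1) (k + 1) (by omega) (by omega) (by simpa using by omega)
    simpa [List.getD_cons_succ] using this
  · intro H i j k h1 h2 h3
    simp only [List.length_cons] at h3
    rcases i with _ | i
    · simp only [List.getD_cons_zero]
      rintro ⟨hc1, hc2⟩
      have hjmem : (x :: L).getD j 0 ∈ L := by
        rcases j with _ | j
        · omega
        · rw [List.getD_cons_succ]
          exact getD_mem (by omega)
      exact absurd hc2 (by have := hx _ hjmem; omega)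
    · rcases j with _ | j
      · omega
      rcases k with _ | k
      · omega
      simp only [List.getD_cons_succ]
      exact H i j k (by omega) (by omega) (by omega)

lemma avoids231_concat_max {x : ℕ} {L : List ℕ} (hx : ∀ y ∈ L, y < x) :
    Avoids231 (L ++ [x]) ↔ Avoids231 L := by
  rw [avoids231_iff, avoids231_iff]
  have hg : ∀ q < L.length, (L ++ [x]).getD q 0 = L.getD q 0 :=
    fun q hq => List.getD_append _ _ _ _ hq
  constructor
  · intro H i j k h1 h2 h3
    have := H i j k h1 h2 (by simp; omega)
    rwa [hg i (by omega), hg j (by omega), hg k h3] at this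
  · intro H i j k h1 h2 h3
    simp only [List.length_append, List.length_cons, List.length_nil] at h3
    rcases eq_or_lt_of_le (show k + 1 ≤ L.length + 1 by omega) with he | hlt
    · have hk : (L ++ [x]).getD k 0 = x := by
        rw [List.getD_append_right _ _ _ _ (by omega), show k - L.length = 0 by omega]
        rfl
      rw [hk, hg i (by omega), hg j (by omega)]
      rintro ⟨hc1, hc2⟩
      have : L.getD i 0 ∈ L := getD_mem (by omega)
      have := hx _ this
      omega
    · have hk : k < L.length := by omega
      rw [hg i (by omega), hg j (by omega), hg k hk]
      exact H i j k h1 h2 hk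


lemma two_le_size {t : BTree} (h : t ≠ .leaf) : 2 ≤ t.size := by
  cases t with
  | leaf => exact absurd rfl h
  | node l r =>
    have := size_pos l; have := size_pos r
    simp only [BTree.size]; omega

lemma avoids231_nil : Avoids231 [] := by
  rw [avoids231_iff]; intro i j k h1 h2 h3; simp at h3

lemma cat_iff (s : BTree) : s.isCaterpillar ↔ Avoids231 (phi s) := by
  induction s with
  | leaf =>
    simp only [BTree.isCaterpillar, phi, true_iff]
    exact avoids231_nil
  | node l r ihl ihr =>
    have hl := size_pos l; have hr := size_pos r
    by_cases hleaf : l = BTree.leaf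
    · subst hleaf
      have he : phi (BTree.node BTree.leaf r) = r.size :: phi r := by
        simp only [phi, BTree.size, List.map_nil, List.nil_append,
          show 1 + r.size - 1 = r.size from by omega]
      rw [he, avoids231_cons_max (fun y hy => by have := (mem_phi.mp hy).2; omega), ← ihr]
      simp [BTree.isCaterpillar]
    · by_cases hrleaf : r = BTree.leaf
      · subst hrleaf
        have he : phi (BTree.node l BTree.leaf) = phi l ++ [l.size] := by
          simp only [phi, show BTree.size BTree.leaf = 1 from rfl,
            show (1:ℕ) - 1 = 0 from rfl, show l.size + 1 - 1 = l.size from by omega]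
          simp
        have hlt : ∀ y ∈ phi l, y < l.size := by
          intro y hy; have := (mem_phi.mp hy).2; have := two_le_size hleaf; omega
        rw [he, avoids231_concat_max hlt, ← ihl]
        simp [BTree.isCaterpillar, BTree.isCaterpillar]
      · have h2l := two_le_size hleaf; have h2r := two_le_size hrleaf
        constructor
        · intro hc
          rcases hc.1 with h | h
          · exact absurd h hleaf
          · exact absurd h hrleaf
        · intro hav
          exfalso
          rw [avoids231_iff] at hav
          set n := l.size + r.size - 1 with hn
          have hlenl : ((phi l).map (· + (r.size - 1))).length = l.size - 1 := by
            simp [phi_length]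
          have hlen : (phi (BTree.node l r)).length = (l.size - 1) + 1 + (r.size - 1) := by
            simp [phi, phi_length]; omega
          have hg0 : (phi (BTree.node l r)).getD 0 0 = (phi l).getD 0 0 + (r.size - 1) := by
            show ((phi l).map (· + (r.size - 1)) ++ n :: phi r).getD 0 0 = _
            rw [List.getD_append _ _ _ _ (by omega)]
            rw [List.getD_eq_getElem _ _ (by omega), List.getElem_map,
              List.getD_eq_getElem _ _ (by rw [phi_length]; omega)]
          have hgj : (phi (BTree.node l r)).getD (l.size - 1) 0 = n := by
            show ((phi l).map (· + (r.size - 1)) ++ n :: phi r).getD (l.size - 1) 0 = _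
            rw [List.getD_append_right _ _ _ _ (by omega), hlenl,
              show l.size - 1 - (l.size - 1) = 0 by omega]
            rfl
          have hgk : (phi (BTree.node l r)).getD (l.size - 1 + 1) 0 = (phi r).getD 0 0 := by
            show ((phi l).map (· + (r.size - 1)) ++ n :: phi r).getD (l.size - 1 + 1) 0 = _
            rw [List.getD_append_right _ _ _ _ (by omega), hlenl,
              show l.size - 1 + 1 - (l.size - 1) = 1 by omega]
            rfl
          have hm0 : (phi l).getD 0 0 ∈ phi l := getD_mem (by rw [phi_length]; omega)
          have hmk : (phi r).getD 0 0 ∈ phi r := getD_mem (by rw [phi_length]; omega)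
          have hb0 := mem_phi.mp hm0
          have hbk := mem_phi.mp hmk
          have := hav 0 (l.size - 1) (l.size - 1 + 1) (by omega) (by omega) (by omega)
          rw [hg0, hgj, hgk] at this
          exact this ⟨by omega, by omega⟩


lemma part1 {t : BTree} {m : ℕ} {s : BTree} (h : subAt t m = some s) (j : ℕ) :
    (s.isCaterpillar ∧ s.size = j + 1) ↔
      (Avoids231 (rsub (phi t) ((phi t).idxOf m)) ∧
        (rsub (phi t) ((phi t).idxOf m)).length = j) := by
  obtain ⟨c, hmc, hr⟩ := rsub_subAt h
  have hsz := (subAt_decomp t m s h).2.1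
  rw [hr, avoids231_map_add, ← cat_iff, List.length_map, phi_length]
  constructor
  · rintro ⟨h1, h2⟩; exact ⟨h1, by omega⟩
  · rintro ⟨h1, h2⟩; exact ⟨h1, by omega⟩

lemma subtree_size_le : ∀ {t s : BTree}, s ∈ t.subtrees → s.size ≤ t.size := by
  intro t
  induction t with
  | leaf => intro s hs; simp [BTree.subtrees] at hs; subst hs; exact le_refl _
  | node l r ihl ihr =>
    intro s hs
    rw [BTree.subtrees, List.mem_cons, List.mem_append] at hs
    have hl := size_pos l; have hr := size_pos r
    rcases hs with rfl | hs | hs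
    · exact le_refl _
    · have := ihl hs; simp only [BTree.size]; omega
    · have := ihr hs; simp only [BTree.size]; omega

lemma leaf_mem_subtrees (t : BTree) : BTree.leaf ∈ t.subtrees := by
  induction t with
  | leaf => simp [BTree.subtrees]
  | node l r ihl ihr =>
    rw [BTree.subtrees, List.mem_cons, List.mem_append]
    exact Or.inr (Or.inl ihl)

lemma nll_mem_subtrees : ∀ {t : BTree}, 2 ≤ t.size →
    BTree.node BTree.leaf BTree.leaf ∈ t.subtrees := by
  intro t
  induction t with
  | leaf => intro h; simp [BTree.size] at h
  | node l r ihl ihr =>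
    intro _
    rw [BTree.subtrees, List.mem_cons, List.mem_append]
    by_cases hleaf : l = BTree.leaf
    · by_cases hrleaf : r = BTree.leaf
      · subst hleaf; subst hrleaf; exact Or.inl rfl
      · exact Or.inr (Or.inr (ihr (two_le_size hrleaf)))
    · exact Or.inr (Or.inl (ihl (two_le_size hleaf)))

lemma subAt_of_mem : ∀ {t s : BTree}, s ∈ t.subtrees → s ≠ BTree.leaf →
    ∃ m, 1 ≤ m ∧ m ≤ t.size - 1 ∧ subAt t m = some s := by
  intro t
  induction t with
  | leaf =>
    intro s hs hne
    simp [BTree.subtrees] at hs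
    exact absurd hs hne
  | node l r ihl ihr =>
    intro s hs hne
    have hl := size_pos l; have hr := size_pos r
    rw [BTree.subtrees, List.mem_cons, List.mem_append] at hs
    rcases hs with rfl | hs | hs
    · exact ⟨l.size + r.size - 1, by omega, by simp only [BTree.size]; omega, by simp [subAt]⟩
    · obtain ⟨m, h1, h2, h3⟩ := ihl hs hne
      have hls : 2 ≤ l.size := by omega
      refine ⟨m + (r.size - 1), by omega, by simp only [BTree.size]; omega, ?_⟩
      simp only [subAt]
      rw [if_neg (by omega), if_pos (by omega),
        show m + (r.size - 1) - (r.size - 1) = m by omega]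
      exact h3
    · obtain ⟨m, h1, h2, h3⟩ := ihr hs hne
      refine ⟨m, h1, by simp only [BTree.size]; omega, ?_⟩
      simp only [subAt]
      rw [if_neg (by omega), if_neg (by omega)]
      exact h3

lemma subAt_isSome : ∀ {t : BTree} {m : ℕ}, 1 ≤ m → m ≤ t.size - 1 →
    ∃ s, subAt t m = some s := by
  intro t
  induction t with
  | leaf => intro m h1 h2; simp [BTree.size] at h2; omega
  | node l r ihl ihr =>
    intro m h1 h2
    have hl := size_pos l; have hr := size_pos r
    simp only [BTree.size] at h2
    by_cases hm : m = l.size + r.size - 1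
    · exact ⟨BTree.node l r, by simp [subAt, hm]⟩
    · by_cases hge : r.size ≤ m
      · obtain ⟨s, hs⟩ := ihl (m := m - (r.size - 1)) (by omega) (by omega)
        refine ⟨s, ?_⟩
        simp only [subAt]
        rw [if_neg hm, if_pos hge]
        exact hs
      · obtain ⟨s, hs⟩ := ihr (m := m) h1 (by omega)
        refine ⟨s, ?_⟩
        simp only [subAt]
        rw [if_neg hm, if_neg hge]
        exact hs

lemma gamma_spec (t : BTree) :
    (∃ s ∈ t.subtrees, s.isCaterpillar ∧ s.size = t.gamma) ∧
      (∀ s ∈ t.subtrees, s.isCaterpillar → s.size ≤ t.gamma) := by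
  have hne : {m | ∃ s ∈ t.subtrees, s.isCaterpillar ∧ s.size = m}.Nonempty :=
    ⟨1, BTree.leaf, leaf_mem_subtrees t, trivial, rfl⟩
  have hbdd : BddAbove {m | ∃ s ∈ t.subtrees, s.isCaterpillar ∧ s.size = m} := by
    refine ⟨t.size, ?_⟩
    rintro x ⟨s, hs, _, rfl⟩
    exact subtree_size_le hs
  constructor
  · exact Nat.sSup_mem hne hbdd
  · intro s hs hc
    exact le_csSup hbdd ⟨s, hs, hc, rfl⟩

lemma two_le_gamma {t : BTree} (h : 2 ≤ t.size) : 2 ≤ t.gamma := by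
  have := (gamma_spec t).2 (BTree.node BTree.leaf BTree.leaf) (nll_mem_subtrees h)
    ⟨Or.inl rfl, trivial, trivial⟩
  simpa [BTree.size] using this


end CatAux

open CatAux in
/-- Under φ, the subtree `t_m` rooted at the node labelled `m` is a caterpillar of size
`j+1` iff `r̃_π(m)` is a 231-avoiding permutation of size `j`; in particular
`γ(t) − 1` is the maximal size of a permutation in `Av(231) ∩ r̃_π`. -/
theorem caterpillar_iff_rsub_avoids231 (t : BTree) (h : 2 ≤ t.size) :
    (∀ m : ℕ, ∀ s : BTree, subAt t m = some s → ∀ j : ℕ,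
      (s.isCaterpillar ∧ s.size = j + 1) ↔
        (Avoids231 (rsub (phi t) ((phi t).idxOf m)) ∧
          (rsub (phi t) ((phi t).idxOf m)).length = j)) ∧
    IsGreatest {j | ∃ i < (phi t).length, Avoids231 (rsub (phi t) i) ∧
        (rsub (phi t) i).length = j}
      (t.gamma - 1) := by
  refine ⟨fun m s hsub j => part1 hsub j, ?_, ?_⟩
  · obtain ⟨⟨s, hs, hcat, hsize⟩, hub⟩ := gamma_spec t
    have hg2 : 2 ≤ t.gamma := two_le_gamma h
    have hsne : s ≠ BTree.leaf := by
      intro he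
      rw [he] at hsize
      simp only [BTree.size] at hsize
      omega
    obtain ⟨m, hm1, hm2, hsub⟩ := subAt_of_mem hs hsne
    have hmp : m ∈ phi t := mem_phi.mpr ⟨hm1, hm2⟩
    exact ⟨(phi t).idxOf m, List.idxOf_lt_length_iff.mpr hmp,
      (part1 hsub (t.gamma - 1)).mp ⟨hcat, by omega⟩⟩
  · rintro j ⟨i, hi, hav, hlenj⟩
    have hmp : (phi t).getD i 0 ∈ phi t := getD_mem hi
    have hidx : (phi t).idxOf ((phi t).getD i 0) = i := by
      rw [List.getD_eq_getElem _ _ hi]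
      exact (phi_nodup t).idxOf_getElem i hi
    obtain ⟨hm1, hm2⟩ := mem_phi.mp hmp
    obtain ⟨s, hsub⟩ := subAt_isSome hm1 hm2
    obtain ⟨hcat, hsz⟩ := (part1 hsub j).mpr (by rw [hidx]; exact ⟨hav, hlenj⟩)
    have hmem := (subAt_decomp t _ s hsub).1
    have := (gamma_spec t).2 s hmem hcat
    omega
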